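/- The function J̃ : ℝ → ℝ defined by J̃(v) = (1/4)v² + (1/2)(1 − sgn(v)v²)² is differentiable at v = 0 with J̃′(0) = 0, yet v = 0 is not a local minimizer of J̃; in other words, 0 is a stationary point of J̃ that is not a local extremum of minimum type. -/
import Mathlib


/-- Transformed scalar objective `J̃(v) = (1/4)v² + (1/2)(1 - sgn(v)v²)²`. -/
noncomputable def Jt (v : ℝ) : ℝ :=
  1 / 4 * v ^ 2 + 1 / 2 * (1 - Real.sign v * v ^ 2) ^ 2

lemma Jt_zero : Jt 0 = 1 / 2 := by
  simp [Jt, Real.sign_zero]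

lemma Jt_bound (v : ℝ) (hv : |v| ≤ 1) : |Jt v - 1 / 2| ≤ 2 * v ^ 2 := by
  have hs : |Real.sign v| ≤ 1 := by
    rcases Real.sign_apply_eq v with h | h | h <;> simp [h]
  have hv2 : v ^ 2 ≤ 1 := by nlinarith [abs_nonneg v, sq_abs v]
  have h1 : -1 ≤ Real.sign v := by
    have := abs_le.mp hs; exact this.1
  have h2 : Real.sign v ≤ 1 := (abs_le.mp hs).2
  have : Jt v - 1 / 2 = 1 / 4 * v ^ 2 - Real.sign v * v ^ 2
      + 1 / 2 * (Real.sign v) ^ 2 * v ^ 4 := by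
    unfold Jt; ring
  rw [this]
  have hs2 : (Real.sign v) ^ 2 ≤ 1 := by nlinarith
  have hv4 : v ^ 4 ≤ v ^ 2 := by nlinarith [sq_nonneg v, sq_nonneg (v^2)]
  rw [abs_le]
  constructor <;> nlinarith [sq_nonneg v, sq_nonneg (v^2), sq_nonneg (Real.sign v * v^2),
    mul_nonneg (sq_nonneg (Real.sign v)) (sq_nonneg (v^2))]

theorem transformed_stationary_not_local_min :
    HasDerivAt Jt 0 0 ∧
    ¬ ∃ ε > (0 : ℝ), ∀ w : ℝ, |w - 0| < ε → Jt 0 ≤ Jt w := by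
  constructor
  · rw [hasDerivAt_iff_isLittleO, Asymptotics.isLittleO_iff]
    intro c hc
    rw [Metric.eventually_nhds_iff]
    refine ⟨min (c / 2) 1, lt_min (by linarith) one_pos, fun v hv => ?_⟩
    simp only [Real.dist_eq, sub_zero] at hv
    have hv1 : |v| ≤ 1 := le_of_lt (lt_of_lt_of_le hv (min_le_right _ _))
    have hvc : |v| ≤ c / 2 := le_of_lt (lt_of_lt_of_le hv (min_le_left _ _))
    have hb := Jt_bound v hv1
    simp only [sub_zero, smul_zero, sub_zero, Real.norm_eq_abs, Jt_zero]
    calc |Jt v - 1 / 2| ≤ 2 * v ^ 2 := hb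
      _ = 2 * |v| * |v| := by rw [← sq_abs]; ring
      _ ≤ c * |v| := by nlinarith [abs_nonneg v]
  · rintro ⟨ε, hε, h⟩
    set w := min ε 1 / 2 with hw
    have hw0 : 0 < w := by positivity
    have hwε : w < ε := by
      have : min ε 1 ≤ ε := min_le_left _ _
      simp only [hw]; linarith
    have hw1 : w ≤ 1 / 2 := by
      have : min ε 1 ≤ 1 := min_le_right _ _
      simp only [hw]; linarith
    have hsign : Real.sign w = 1 := Real.sign_of_pos hw0
    have := h w (by rwa [sub_zero, abs_of_pos hw0])
    rw [Jt_zero] at this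
    unfold Jt at this
    rw [hsign] at this
    have hq : w ^ 2 ≤ 1 / 4 := by nlinarith
    nlinarith [mul_pos hw0 hw0, sq_nonneg w, mul_nonneg (sq_nonneg w) (sq_nonneg w)]
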